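/- Let σ>0 and let the noise density be g^σ(z)=φ(z;−σ²/2,σ²). Then π_Z^σ(ϱ_Z^σ) := ∫_ℝ ϱ_Z^σ(z)·π_Z^σ(z) dz = 2·Φ(−σ/√2). Moreover, π_Z^σ(1/ϱ_Z^σ) := ∫_ℝ π_Z^σ(z)/ϱ_Z^σ(z) dz = ∫_ℝ φ(w;0,1)/{1 − ϱ̄_Z^σ(w)} dw, where ϱ̄_Z^σ(w) = Φ(w+σ) − exp(−wσ − σ²/2)·Φ(w). -/

import Mathlib

open MeasureTheory ProbabilityTheory Filter Real Set
open scoped ENNReal NNReal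

noncomputable section

/-- The standard normal cumulative distribution function `Φ`. -/
def stdNormCDF (x : ℝ) : ℝ := ((gaussianReal 0 1) (Set.Iic x)).toReal

/-- The Gaussian noise density `g^σ(z) = φ(z; −σ²/2, σ²)`. -/
def gNoise (s : ℝ) (z : ℝ) : ℝ :=
  gaussianPDFReal (-(s ^ 2) / 2) (Real.toNNReal (s ^ 2)) z

/-- `π_Z^σ(z) = e^z g^σ(z)`. -/
def piZg (s z : ℝ) : ℝ := Real.exp z * gNoise s z

/-- `ϱ_Z^σ(z) = ∫ g^σ(w) min{1, e^{w−z}} dw`. -/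
def rhoZg (s z : ℝ) : ℝ := ∫ w, gNoise s w * min 1 (Real.exp (w - z))

lemma coe_toNNReal_sq (s : ℝ) : ((Real.toNNReal (s ^ 2) : ℝ≥0) : ℝ) = s ^ 2 :=
  Real.coe_toNNReal _ (sq_nonneg s)

lemma toNNReal_sq_ne_zero {s : ℝ} (hs : 0 < s) : Real.toNNReal (s ^ 2) ≠ 0 := by
  simp only [ne_eq, Real.toNNReal_eq_zero, not_le]
  positivity

lemma stdNormCDF_eq (x : ℝ) :
    stdNormCDF x = ∫ w in Set.Iic x, gaussianPDFReal 0 1 w := by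
  rw [stdNormCDF, gaussianReal_apply_eq_integral 0 one_ne_zero,
    ENNReal.toReal_ofReal (integral_nonneg fun w => gaussianPDFReal_nonneg _ _ _)]

lemma gaussianReal_Iic {s : ℝ} (hs : 0 < s) (m x : ℝ) :
    (gaussianReal m (Real.toNNReal (s ^ 2))) (Set.Iic x)
      = (gaussianReal 0 1) (Set.Iic ((x - m) / s)) := by
  have hv : (⟨s ^ 2, sq_nonneg s⟩ : ℝ≥0) * 1 = Real.toNNReal (s ^ 2) := by
    ext
    simp [coe_toNNReal_sq, sq_nonneg]
  have h1 : (gaussianReal 0 1).map (fun y => s * y) = gaussianReal 0 (Real.toNNReal (s ^ 2)) := by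
    rw [gaussianReal_map_const_mul, mul_zero]
    exact congrArg _ hv
  have h2 : (gaussianReal 0 (Real.toNNReal (s ^ 2))).map (fun y => y + m)
      = gaussianReal m (Real.toNNReal (s ^ 2)) := by
    simpa using gaussianReal_map_add_const (μ := 0) (v := Real.toNNReal (s ^ 2)) m
  rw [← h2, ← h1, Measure.map_map (measurable_id'.add_const m) (measurable_const_mul s)]
  rw [show ((fun x => x + m) ∘ fun x => s * x) = fun x => s * x + m from rfl,
    Measure.map_apply ((measurable_const_mul s).add_const m) measurableSet_Iic]
  congr 1
  ext y
  simp only [Set.mem_preimage, Set.mem_Iic, Function.comp_apply]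
  rw [le_div_iff₀ hs]
  constructor <;> intro h <;> nlinarith

lemma integral_Iic_gaussianPDFReal {s : ℝ} (hs : 0 < s) (m x : ℝ) :
    ∫ w in Set.Iic x, gaussianPDFReal m (Real.toNNReal (s ^ 2)) w
      = stdNormCDF ((x - m) / s) := by
  have hv := toNNReal_sq_ne_zero hs
  have h := gaussianReal_Iic hs m x
  rw [gaussianReal_apply_eq_integral _ hv, gaussianReal_apply_eq_integral _ one_ne_zero] at h
  rw [stdNormCDF_eq]
  exact (ENNReal.ofReal_eq_ofReal_iff
    (integral_nonneg fun w => gaussianPDFReal_nonneg _ _ _)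
    (integral_nonneg fun w => gaussianPDFReal_nonneg _ _ _)).mp h




lemma piZg_eq {s : ℝ} (hs : 0 < s) (z : ℝ) :
    piZg s z = gaussianPDFReal (s ^ 2 / 2) (Real.toNNReal (s ^ 2)) z := by
  have hs2 : (s : ℝ) ^ 2 ≠ 0 := by positivity
  simp only [piZg, gNoise, gaussianPDFReal, coe_toNNReal_sq]
  rw [mul_comm (rexp z), mul_assoc, ← Real.exp_add]
  congr 1
  field_simp
  ring

lemma piZg_comp {s : ℝ} (hs : 0 < s) (w : ℝ) :
    s * piZg s (s * w + s ^ 2 / 2) = gaussianPDFReal 0 1 w := by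
  rw [piZg_eq hs]
  simp only [gaussianPDFReal, coe_toNNReal_sq, NNReal.coe_one]
  have h1 : Real.sqrt (2 * π * s ^ 2) = Real.sqrt (2 * π * 1) * s := by
    rw [mul_one, Real.sqrt_mul (by positivity : (0:ℝ) ≤ 2 * π), Real.sqrt_sq hs.le]
  rw [h1]
  have h2 : (-(s * w + s ^ 2 / 2 - s ^ 2 / 2) ^ 2 / (2 * s ^ 2)) = -w ^ 2 / (2 * 1) := by
    have : (s : ℝ) ^ 2 ≠ 0 := by positivity
    field_simp
    ring
  rw [h2]
  have hsp : Real.sqrt (2 * π * 1) ≠ 0 := by positivity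
  field_simp
  ring

lemma min_nonneg' (x : ℝ) : 0 ≤ min 1 (Real.exp x) :=
  le_min zero_le_one (Real.exp_pos x).le

lemma integrable_rho_integrand (s z : ℝ) :
    Integrable (fun w => gNoise s w * min 1 (Real.exp (w - z))) := by
  refine Integrable.mono (integrable_gaussianPDFReal (-(s ^ 2) / 2) (Real.toNNReal (s ^ 2)))
    ?_ (ae_of_all _ fun w => ?_)
  · exact ((measurable_gaussianPDFReal _ _).mul
      (measurable_const.min ((measurable_id.sub_const z).exp))).aestronglyMeasurable
  · have h0 : 0 ≤ gNoise s w * min 1 (Real.exp (w - z)) :=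
      mul_nonneg (gaussianPDFReal_nonneg _ _ _) (min_nonneg' _)
    rw [Real.norm_eq_abs, Real.norm_eq_abs, abs_of_nonneg h0,
      abs_of_nonneg (gaussianPDFReal_nonneg _ _ _)]
    calc gNoise s w * min 1 (Real.exp (w - z)) ≤ gNoise s w * 1 :=
          mul_le_mul_of_nonneg_left (min_le_left _ _) (gaussianPDFReal_nonneg _ _ _)
      _ = gNoise s w := mul_one _

lemma integral_Iic_gNoise {s : ℝ} (hs : 0 < s) (z : ℝ) :
    ∫ w in Set.Iic z, gNoise s w = stdNormCDF ((z + s ^ 2 / 2) / s) := by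
  have := integral_Iic_gaussianPDFReal hs (-(s ^ 2) / 2) z
  rw [show z - -(s ^ 2) / 2 = z + s ^ 2 / 2 by ring] at this
  exact this

lemma rhoZg_eq {s : ℝ} (hs : 0 < s) (z : ℝ) :
    rhoZg s z = (1 - stdNormCDF ((z + s ^ 2 / 2) / s))
      + Real.exp (-z) * stdNormCDF ((z - s ^ 2 / 2) / s) := by
  have hInt := integrable_rho_integrand s z
  have hgInt : Integrable (gNoise s) :=
    integrable_gaussianPDFReal (-(s ^ 2) / 2) (Real.toNNReal (s ^ 2))
  have hsplit := intervalIntegral.integral_Iic_add_Ioi (b := z) hInt.integrableOn hInt.integrableOn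
  have hgsplit := intervalIntegral.integral_Iic_add_Ioi (b := z) hgInt.integrableOn hgInt.integrableOn
  have hg1 : ∫ w, gNoise s w = 1 :=
    integral_gaussianPDFReal_eq_one (-(s ^ 2) / 2) (toNNReal_sq_ne_zero hs)
  have hIoi : ∫ w in Set.Ioi z, gNoise s w * min 1 (Real.exp (w - z))
      = 1 - stdNormCDF ((z + s ^ 2 / 2) / s) := by
    have h1 : ∫ w in Set.Ioi z, gNoise s w * min 1 (Real.exp (w - z))
        = ∫ w in Set.Ioi z, gNoise s w := by
      refine setIntegral_congr_fun measurableSet_Ioi fun w hw => ?_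
      rw [min_eq_left (Real.one_le_exp (by simp only [Set.mem_Ioi] at hw; linarith)), mul_one]
    rw [h1, ← integral_Iic_gNoise hs]
    linarith [hgsplit.trans hg1]
  have hIic : ∫ w in Set.Iic z, gNoise s w * min 1 (Real.exp (w - z))
      = Real.exp (-z) * stdNormCDF ((z - s ^ 2 / 2) / s) := by
    have h1 : ∫ w in Set.Iic z, gNoise s w * min 1 (Real.exp (w - z))
        = ∫ w in Set.Iic z, Real.exp (-z) * gaussianPDFReal (s ^ 2 / 2) (Real.toNNReal (s ^ 2)) w := by
      refine setIntegral_congr_fun measurableSet_Iic fun w hw => ?_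
      rw [min_eq_right (Real.exp_le_one_iff.mpr (by simp only [Set.mem_Iic] at hw; linarith)),
        ← piZg_eq hs]
      simp only [piZg, gNoise]
      rw [Real.exp_sub]
      rw [Real.exp_neg]
      ring
    rw [h1, integral_const_mul, integral_Iic_gaussianPDFReal hs]
  rw [rhoZg, ← hsplit, hIic, hIoi]
  ring

lemma phi_integrable : Integrable (gaussianPDFReal 0 1) := integrable_gaussianPDFReal 0 1

lemma phi_integral_one : ∫ w, gaussianPDFReal 0 1 w = 1 :=
  integral_gaussianPDFReal_eq_one 0 one_ne_zero

lemma stdNormCDF_nonneg (x : ℝ) : 0 ≤ stdNormCDF x := by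
  rw [stdNormCDF_eq]
  exact integral_nonneg fun w => gaussianPDFReal_nonneg _ _ _

lemma stdNormCDF_le_one (x : ℝ) : stdNormCDF x ≤ 1 := by
  rw [stdNormCDF_eq, ← phi_integral_one]
  exact setIntegral_le_integral phi_integrable (ae_of_all _ fun w => gaussianPDFReal_nonneg _ _ _)

lemma phi_continuous : Continuous (gaussianPDFReal 0 1) := by
  rw [gaussianPDFReal_def]
  fun_prop

lemma hasDerivAt_stdNormCDF (x : ℝ) : HasDerivAt stdNormCDF (gaussianPDFReal 0 1 x) x := by
  have key : stdNormCDF = fun y => stdNormCDF 0 + ∫ t in (0:ℝ)..y, gaussianPDFReal 0 1 t := by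
    funext y
    rw [← intervalIntegral.integral_Iic_sub_Iic phi_integrable.integrableOn
      phi_integrable.integrableOn, stdNormCDF_eq, stdNormCDF_eq]
    ring
  rw [key]
  exact (intervalIntegral.integral_hasDerivAt_right
    phi_integrable.intervalIntegrable
    phi_continuous.stronglyMeasurable.stronglyMeasurableAtFilter
    phi_continuous.continuousAt).const_add _

lemma stdNormCDF_continuous : Continuous stdNormCDF :=
  continuous_iff_continuousAt.mpr fun x => (hasDerivAt_stdNormCDF x).continuousAt

lemma phi_even (w : ℝ) : gaussianPDFReal 0 1 (-w) = gaussianPDFReal 0 1 w := by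
  simp [gaussianPDFReal, neg_sq]

lemma stdNormCDF_neg (x : ℝ) : stdNormCDF (-x) = 1 - stdNormCDF x := by
  have h1 : ∫ w in Set.Iic (-x), gaussianPDFReal 0 1 w
      = ∫ w in Set.Ioi x, gaussianPDFReal 0 1 w := by
    calc ∫ w in Set.Iic (-x), gaussianPDFReal 0 1 w
        = ∫ w in Set.Iic (-x), gaussianPDFReal 0 1 (-w) :=
          setIntegral_congr_fun measurableSet_Iic fun w _ => (phi_even w).symm
      _ = ∫ w in Set.Ioi (-(-x)), gaussianPDFReal 0 1 w := _root_.integral_comp_neg_Iic (-x) _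
      _ = ∫ w in Set.Ioi x, gaussianPDFReal 0 1 w := by rw [neg_neg]
  have h2 := intervalIntegral.integral_Iic_add_Ioi (b := x)
    phi_integrable.integrableOn phi_integrable.integrableOn
  rw [stdNormCDF_eq, stdNormCDF_eq, h1]
  rw [phi_integral_one] at h2
  linarith

lemma stdNormCDF_zero : stdNormCDF 0 = 1 / 2 := by
  have := stdNormCDF_neg 0
  rw [neg_zero] at this
  linarith

lemma integral_comp_neg' (f : ℝ → ℝ) : ∫ x, f (-x) = ∫ x, f x := by
  have A : MeasurableEmbedding (fun x : ℝ => -x) := (Homeomorph.neg ℝ).measurableEmbedding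
  conv_rhs => rw [← Measure.map_neg_eq_self (volume : Measure ℝ)]
  exact (A.integral_map f).symm

lemma half_ne : Real.toNNReal (1 / 2) ≠ 0 := by
  simp only [ne_eq, Real.toNNReal_eq_zero, not_le]
  norm_num

lemma phi_mul_phi (a w : ℝ) :
    gaussianPDFReal 0 1 w * gaussianPDFReal 0 1 (w + a)
      = (rexp (-(a ^ 2) / 4) / (2 * Real.sqrt π))
          * gaussianPDFReal (-a / 2) (Real.toNNReal (1 / 2)) w := by
  have hc : ((Real.toNNReal (1 / 2) : ℝ≥0) : ℝ) = 1 / 2 := Real.coe_toNNReal _ (by norm_num)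
  simp only [gaussianPDFReal, NNReal.coe_one, hc, sub_zero, mul_one]
  have hs1 : Real.sqrt (2 * π * (1 / 2)) = Real.sqrt π := by
    rw [show (2 * π * (1 / 2) : ℝ) = π by ring]
  rw [hs1]
  have hA : Real.sqrt (2 * π) * Real.sqrt (2 * π) = 2 * π :=
    Real.mul_self_sqrt (by positivity)
  have hB : Real.sqrt π * Real.sqrt π = π := Real.mul_self_sqrt Real.pi_pos.le
  have hApos : (0:ℝ) < Real.sqrt (2 * π) := Real.sqrt_pos.mpr (by positivity)
  have hBpos : (0:ℝ) < Real.sqrt π := Real.sqrt_pos.mpr Real.pi_pos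
  have hE : rexp (- w ^ 2 / 2) * rexp (-(w + a) ^ 2 / 2)
      = rexp (-(a ^ 2) / 4) * rexp (-(w - -a / 2) ^ 2 / (2 * (1 / 2))) := by
    rw [← Real.exp_add, ← Real.exp_add]
    congr 1
    ring
  have h1 : (Real.sqrt (2 * π))⁻¹ * rexp (- w ^ 2 / 2)
        * ((Real.sqrt (2 * π))⁻¹ * rexp (-(w + a) ^ 2 / 2))
      = (Real.sqrt (2 * π) * Real.sqrt (2 * π))⁻¹
        * (rexp (- w ^ 2 / 2) * rexp (-(w + a) ^ 2 / 2)) := by ring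
  rw [h1, hA, hE]
  have h2 : rexp (-(a ^ 2) / 4) / (2 * Real.sqrt π)
        * ((Real.sqrt π)⁻¹ * rexp (-(w - -a / 2) ^ 2 / (2 * (1 / 2))))
      = (2 * (Real.sqrt π * Real.sqrt π))⁻¹
        * (rexp (-(a ^ 2) / 4) * rexp (-(w - -a / 2) ^ 2 / (2 * (1 / 2)))) := by ring
  rw [h2, hB]

lemma integral_phi_mul_phi (a : ℝ) :
    ∫ w, gaussianPDFReal 0 1 w * gaussianPDFReal 0 1 (w + a)
      = rexp (-(a ^ 2) / 4) / (2 * Real.sqrt π) := by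
  simp_rw [phi_mul_phi a]
  rw [integral_const_mul, integral_gaussianPDFReal_eq_one _ half_ne, mul_one]

lemma phi_le (x : ℝ) : gaussianPDFReal 0 1 x ≤ (Real.sqrt (2 * π))⁻¹ := by
  rw [gaussianPDFReal]
  have h1 : Real.sqrt (2 * π * (1:ℝ≥0)) = Real.sqrt (2 * π) := by norm_num
  rw [h1]
  calc (Real.sqrt (2 * π))⁻¹ * rexp (-(x - 0) ^ 2 / (2 * (1:ℝ≥0)))
      ≤ (Real.sqrt (2 * π))⁻¹ * 1 := by
        refine mul_le_mul_of_nonneg_left ?_ (by positivity)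
        refine Real.exp_le_one_iff.mpr ?_
        have := sq_nonneg (x - 0)
        simp only [NNReal.coe_one]
        nlinarith
    _ = (Real.sqrt (2 * π))⁻¹ := mul_one _

lemma integrable_phi_mul_cdf (a : ℝ) :
    Integrable (fun w => gaussianPDFReal 0 1 w * stdNormCDF (w + a)) := by
  refine phi_integrable.mono ?_ (ae_of_all _ fun w => ?_)
  · exact (phi_continuous.mul
      (stdNormCDF_continuous.comp (continuous_id.add continuous_const))).aestronglyMeasurable
  · rw [Real.norm_eq_abs, Real.norm_eq_abs,
      abs_of_nonneg (mul_nonneg (gaussianPDFReal_nonneg _ _ _) (stdNormCDF_nonneg _)),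
      abs_of_nonneg (gaussianPDFReal_nonneg _ _ _)]
    calc gaussianPDFReal 0 1 w * stdNormCDF (w + a) ≤ gaussianPDFReal 0 1 w * 1 :=
          mul_le_mul_of_nonneg_left (stdNormCDF_le_one _) (gaussianPDFReal_nonneg _ _ _)
      _ = gaussianPDFReal 0 1 w := mul_one _

lemma hasDerivAt_F (b : ℝ) :
    HasDerivAt (fun b => ∫ w, gaussianPDFReal 0 1 w * stdNormCDF (w + b))
      (rexp (-(b ^ 2) / 4) / (2 * Real.sqrt π)) b := by
  have h := hasDerivAt_integral_of_dominated_loc_of_deriv_le (μ := volume) (x₀ := b) (s := Metric.ball b 1)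
    (F := fun b w => gaussianPDFReal 0 1 w * stdNormCDF (w + b))
    (F' := fun b w => gaussianPDFReal 0 1 w * gaussianPDFReal 0 1 (w + b))
    (bound := fun w => gaussianPDFReal 0 1 w * (Real.sqrt (2 * π))⁻¹)
    (Metric.ball_mem_nhds b one_pos)
    (Eventually.of_forall fun x => (phi_continuous.mul
      (stdNormCDF_continuous.comp (continuous_id.add continuous_const))).aestronglyMeasurable)
    (integrable_phi_mul_cdf b)
    ((phi_continuous.mul
      (phi_continuous.comp (continuous_id.add continuous_const))).aestronglyMeasurable)
    (ae_of_all _ fun w x _ => by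
      rw [Real.norm_eq_abs, abs_of_nonneg
        (mul_nonneg (gaussianPDFReal_nonneg _ _ _) (gaussianPDFReal_nonneg _ _ _))]
      exact mul_le_mul_of_nonneg_left (phi_le _) (gaussianPDFReal_nonneg _ _ _))
    (phi_integrable.mul_const _)
    (ae_of_all _ fun w x _ => by
      simpa using ((hasDerivAt_stdNormCDF (w + x)).comp x
        ((hasDerivAt_id x).const_add w)).const_mul (gaussianPDFReal 0 1 w))
  rw [← integral_phi_mul_phi b]
  exact h.2

lemma hasDerivAt_G (b : ℝ) :
    HasDerivAt (fun b => stdNormCDF (b / Real.sqrt 2))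
      (rexp (-(b ^ 2) / 4) / (2 * Real.sqrt π)) b := by
  have h0 := (hasDerivAt_stdNormCDF (b / Real.sqrt 2)).comp b
    ((hasDerivAt_id b).div_const (Real.sqrt 2))
  refine HasDerivAt.congr_deriv h0 (Eq.symm ?_)
  have h2 : Real.sqrt 2 * Real.sqrt 2 = 2 := Real.mul_self_sqrt (by norm_num)
  have hq : (b / Real.sqrt 2) ^ 2 = b ^ 2 / 2 := by
    rw [div_pow]
    congr 1
    rw [sq, h2]
  rw [gaussianPDFReal]
  have h1 : Real.sqrt (2 * π * (1:ℝ≥0)) = Real.sqrt 2 * Real.sqrt π := by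
    rw [show (2 * π * ((1:ℝ≥0):ℝ)) = 2 * π by norm_num, Real.sqrt_mul (by norm_num)]
  rw [h1]
  have harg : -(b / Real.sqrt 2 - 0) ^ 2 / (2 * (1:ℝ≥0)) = -(b ^ 2) / 4 := by
    rw [sub_zero, hq]
    norm_num
    ring
  rw [harg]
  have hBpos : (0:ℝ) < Real.sqrt π := Real.sqrt_pos.mpr Real.pi_pos
  have hs2 : (0:ℝ) < Real.sqrt 2 := Real.sqrt_pos.mpr (by norm_num)
  rw [div_eq_mul_inv, mul_comm ((Real.sqrt 2 * Real.sqrt π)⁻¹), mul_assoc]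
  congr 1
  rw [mul_inv, mul_inv]
  field_simp
  nlinarith [h2]

lemma integral_phi_cdf (a : ℝ) :
    ∫ w, gaussianPDFReal 0 1 w * stdNormCDF (w + a) = stdNormCDF (a / Real.sqrt 2) := by
  set F : ℝ → ℝ := fun b => ∫ w, gaussianPDFReal 0 1 w * stdNormCDF (w + b) with hFdef
  set G : ℝ → ℝ := fun b => stdNormCDF (b / Real.sqrt 2) with hGdef
  have hderiv : ∀ y, HasDerivAt (fun x => F x - G x) 0 y := fun y => by
    have := (hasDerivAt_F y).sub (hasDerivAt_G y); rw [sub_self] at this; exact this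
  have hconst : F a - G a = F 0 - G 0 :=
    is_const_of_deriv_eq_zero (fun y => (hderiv y).differentiableAt)
      (fun y => (hderiv y).deriv) a 0
  have hG0 : G 0 = 1 / 2 := by
    simp only [hGdef, zero_div]
    exact stdNormCDF_zero
  have hF0 : F 0 = 1 / 2 := by
    have h2 : ∫ w, gaussianPDFReal 0 1 w * stdNormCDF w
        = ∫ w, gaussianPDFReal 0 1 w * (1 - stdNormCDF w) := by
      conv_lhs => rw [← integral_comp_neg' (fun w => gaussianPDFReal 0 1 w * stdNormCDF w)]
      simp_rw [phi_even, stdNormCDF_neg]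
    have hint : Integrable (fun w => gaussianPDFReal 0 1 w * stdNormCDF w) := by
      simpa using integrable_phi_mul_cdf 0
    have h3 : ∫ w, gaussianPDFReal 0 1 w * (1 - stdNormCDF w)
        = 1 - ∫ w, gaussianPDFReal 0 1 w * stdNormCDF w := by
      have : (fun w => gaussianPDFReal 0 1 w * (1 - stdNormCDF w))
          = fun w => gaussianPDFReal 0 1 w - gaussianPDFReal 0 1 w * stdNormCDF w :=
        funext fun w => by ring
      rw [this, integral_sub phi_integrable hint, phi_integral_one]
    have h4 : F 0 = ∫ w, gaussianPDFReal 0 1 w * stdNormCDF w := by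
      simp only [hFdef, add_zero]
    rw [h4]
    linarith [h2.trans h3]
  have : F a = G a := by linarith
  exact this

lemma integral_scale {s : ℝ} (hs : 0 < s) (c : ℝ) (f : ℝ → ℝ) :
    ∫ x, f x = s * ∫ w, f (s * w + c) := by
  have h1 : ∫ w, f (s * w + c) = |s⁻¹| • ∫ y, f (y + c) :=
    Measure.integral_comp_mul_left (fun y => f (y + c)) s
  rw [h1, integral_add_right_eq_self f c, abs_of_pos (inv_pos.mpr hs), smul_eq_mul, ← mul_assoc,
    mul_inv_cancel₀ hs.ne', one_mul]

lemma rhoZg_comp {s : ℝ} (hs : 0 < s) (w : ℝ) :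
    rhoZg s (s * w + s ^ 2 / 2)
      = 1 - (stdNormCDF (w + s) - Real.exp (-(w * s) - s ^ 2 / 2) * stdNormCDF w) := by
  rw [rhoZg_eq hs]
  have h1 : (s * w + s ^ 2 / 2 + s ^ 2 / 2) / s = w + s := by field_simp; ring
  have h2 : (s * w + s ^ 2 / 2 - s ^ 2 / 2) / s = w := by field_simp; ring
  rw [h1, h2, show -(s * w + s ^ 2 / 2) = -(w * s) - s ^ 2 / 2 by ring]
  ring

lemma phi_shift (s w : ℝ) :
    Real.exp (-(w * s) - s ^ 2 / 2) * gaussianPDFReal 0 1 w = gaussianPDFReal 0 1 (w + s) := by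
  simp only [gaussianPDFReal, NNReal.coe_one, mul_one, sub_zero]
  rw [mul_comm, mul_assoc, ← Real.exp_add]
  congr 1
  ring

lemma claim1 {s : ℝ} (hs : 0 < s) :
    (∫ z, rhoZg s z * piZg s z) = 2 * stdNormCDF (-s / Real.sqrt 2) := by
  rw [integral_scale hs (s ^ 2 / 2) (fun z => rhoZg s z * piZg s z), ← integral_const_mul]
  have hpt : ∀ w, s * (rhoZg s (s * w + s ^ 2 / 2) * piZg s (s * w + s ^ 2 / 2))
      = gaussianPDFReal 0 1 w - gaussianPDFReal 0 1 w * stdNormCDF (w + s)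
        + gaussianPDFReal 0 1 (w + s) * stdNormCDF w := by
    intro w
    have h1 : s * (rhoZg s (s * w + s ^ 2 / 2) * piZg s (s * w + s ^ 2 / 2))
        = rhoZg s (s * w + s ^ 2 / 2) * (s * piZg s (s * w + s ^ 2 / 2)) := by ring
    rw [h1, piZg_comp hs, rhoZg_comp hs, ← phi_shift s w]
    ring
  rw [integral_congr_ae (ae_of_all _ hpt)]
  have hC : Integrable (fun w => gaussianPDFReal 0 1 (w + s) * stdNormCDF w) := by
    have h := (integrable_phi_mul_cdf (-s)).comp_add_right s
    have : (fun w => gaussianPDFReal 0 1 (w + s) * stdNormCDF (w + s + -s))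
        = fun w => gaussianPDFReal 0 1 (w + s) * stdNormCDF w := by
      funext w
      rw [show w + s + -s = w by ring]
    rwa [this] at h
  have hA : Integrable (fun w => gaussianPDFReal 0 1 w - gaussianPDFReal 0 1 w * stdNormCDF (w + s)) :=
    phi_integrable.sub (integrable_phi_mul_cdf s)
  rw [integral_add hA hC,
    integral_sub phi_integrable (integrable_phi_mul_cdf s), phi_integral_one,
    integral_phi_cdf s]
  have hthird : ∫ w, gaussianPDFReal 0 1 (w + s) * stdNormCDF w
      = stdNormCDF (-s / Real.sqrt 2) := by
    have h := integral_add_right_eq_self (μ := volume) (fun u => gaussianPDFReal 0 1 u * stdNormCDF (u + -s)) s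
    have heq : (fun w => gaussianPDFReal 0 1 (w + s) * stdNormCDF (w + s + -s))
        = fun w => gaussianPDFReal 0 1 (w + s) * stdNormCDF w := by
      funext w
      rw [show w + s + -s = w by ring]
    rw [heq] at h
    rw [h, integral_phi_cdf (-s), neg_div]
  rw [hthird]
  have hd : (-s) / Real.sqrt 2 = -(s / Real.sqrt 2) := neg_div _ _
  rw [hd]
  linarith [stdNormCDF_neg (s / Real.sqrt 2)]

lemma claim2 {s : ℝ} (hs : 0 < s) :
    (∫ z, piZg s z / rhoZg s z)
      = ∫ w, gaussianPDFReal 0 1 w /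
          (1 - (stdNormCDF (w + s) - Real.exp (-(w * s) - s ^ 2 / 2) * stdNormCDF w)) := by
  rw [integral_scale hs (s ^ 2 / 2) (fun z => piZg s z / rhoZg s z), ← integral_const_mul]
  congr 1
  funext w
  rw [mul_div_assoc', piZg_comp hs, rhoZg_comp hs]

/-- under Gaussian noise, `π_Z^σ(ϱ_Z^σ) = 2Φ(−σ/√2)` and
`π_Z^σ(1/ϱ_Z^σ)` has the stated integral representation. -/
theorem statement_18 (s : ℝ) (hs : 0 < s) :
    (∫ z, rhoZg s z * piZg s z) = 2 * stdNormCDF (-s / Real.sqrt 2) ∧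
    (∫ z, piZg s z / rhoZg s z)
      = ∫ w, gaussianPDFReal 0 1 w /
          (1 - (stdNormCDF (w + s) - Real.exp (-(w * s) - s ^ 2 / 2) * stdNormCDF w)) := by
  exact ⟨claim1 hs, claim2 hs⟩
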